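/- arXiv:2504.08971 — 3 statements merged into one kernel-verified Lean document; each statement's English description precedes it below -/
import Mathlib

section
/- For orthonormal families {ψ_i}_{i=1}^n and {φ_i}_{i=1}^n in H, let U be a unitary operator with Uψ_i = φ_i for all i, and for 0 ≤ k ≤ n let Ψ_k = (U^{⊗k} ⊗ Id^{⊗(n−k)})Ψ where Ψ is the Slater determinant of the ψ_i. Then for each 1 ≤ k ≤ n, |⟨Ψ_k, Ψ_{k−1}⟩| = |(1/n) Σ_{i=1}^n ⟨φ_i, ψ_i⟩|. -/
open scoped InnerProductSpace
open Equiv Finset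

/-- Let `{ψ_i}`, `{φ_i}` be orthonormal families in `H`, `U` a unitary with
`Uψ_i = φ_i`, and `Ψ_k = (U^{⊗k} ⊗ Id^{⊗(n-k)}) Ψ` where `Ψ` is the Slater
determinant of the `ψ_i`.  Using the tensor inner product
`⟨⊗ a_i, ⊗ b_i⟩ = ∏ ⟨a_i, b_i⟩`, the overlap is
`⟨Ψ_k, Ψ_{k-1}⟩ = (1/n!) Σ_{τ,τ'} sgn τ sgn τ' ∏_i ⟨c_i(τ i), c'_i(τ' i)⟩`
with `c_i = φ` for `i < k` and `ψ` otherwise, `c'_i = φ` for `i < k-1` and `ψ`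
otherwise; its modulus equals `|(1/n) Σ_i ⟨φ_i, ψ_i⟩|` for every `1 ≤ k ≤ n`. -/
theorem slater_overlap_single_site {H : Type*} [NormedAddCommGroup H]
    [InnerProductSpace ℂ H] (n : ℕ) (ψ φ : Fin n → H)
    (hψ : Orthonormal ℂ ψ) (hφ : Orthonormal ℂ φ)
    (U : H ≃ₗᵢ[ℂ] H) (hU : ∀ i, U (ψ i) = φ i)
    (k : ℕ) (hk1 : 1 ≤ k) (hkn : k ≤ n) :
    ‖(1 / (n.factorial : ℂ)) *
        ∑ τ : Perm (Fin n), ∑ τ' : Perm (Fin n),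
          (Perm.sign τ : ℂ) * (Perm.sign τ' : ℂ) *
            ∏ i : Fin n,
              ⟪(if (i : ℕ) < k then φ else ψ) (τ i),
               (if (i : ℕ) < k - 1 then φ else ψ) (τ' i)⟫_ℂ‖ =
      ‖(1 / (n : ℂ)) * ∑ i : Fin n, ⟪φ i, ψ i⟫_ℂ‖ := by
  have hn : 0 < n := hk1.trans hkn
  obtain ⟨n', rfl⟩ : ∃ n', n = n' + 1 := ⟨n - 1, by omega⟩
  have hm : k - 1 < n' + 1 := by omega
  set m : Fin (n' + 1) := ⟨k - 1, hm⟩ with hmdef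
  have hψψ := orthonormal_iff_ite.mp hψ
  have hφφ := orthonormal_iff_ite.mp hφ
  have key : ∀ τ τ' : Perm (Fin (n' + 1)),
      (∏ i : Fin (n' + 1), ⟪(if (i : ℕ) < k then φ else ψ) (τ i),
          (if (i : ℕ) < k - 1 then φ else ψ) (τ' i)⟫_ℂ)
        = if τ' = τ then ⟪φ (τ m), ψ (τ m)⟫_ℂ else 0 := by
    intro τ τ'
    by_cases h : τ' = τ
    · subst h
      rw [if_pos rfl, Finset.prod_eq_single m]
      · have h1 : ((m : ℕ)) < k := by simp only [hmdef]; omega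
        have h2 : ¬ ((m : ℕ) < k - 1) := by simp only [hmdef]; omega
        simp [h1, h2]
      · intro i _ hi
        have hi' : (i : ℕ) ≠ k - 1 := fun hh => hi (Fin.ext hh)
        by_cases hlt : (i : ℕ) < k - 1
        · have : (i : ℕ) < k := by omega
          simp [hlt, this, hφφ, hφ.1]
        · have : ¬ ((i : ℕ) < k) := by omega
          simp [hlt, this, hψψ, hψ.1]
      · simp
    · rw [if_neg h]
      have hex : ∃ i, i ≠ m ∧ τ i ≠ τ' i := by
        by_contra hc
        push_neg at hc
        refine h ?_
        have hfix : ∀ i, i ≠ m → (τ'⁻¹ * τ) i = i := by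
          intro i hi
          simp [Perm.mul_apply, hc i hi]
        have hfm : (τ'⁻¹ * τ) m = m := by
          by_contra hne
          exact hne ((τ'⁻¹ * τ).injective (hfix _ hne))
        have hall : τ'⁻¹ * τ = 1 := Equiv.ext fun i => by
          by_cases hi : i = m
          · subst hi; simpa using hfm
          · simpa using hfix i hi
        exact inv_mul_eq_one.mp hall
      obtain ⟨i, him, hne⟩ := hex
      apply Finset.prod_eq_zero (Finset.mem_univ i)
      have hi' : (i : ℕ) ≠ k - 1 := fun hh => him (Fin.ext hh)
      by_cases hlt : (i : ℕ) < k - 1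
      · have : (i : ℕ) < k := by omega
        simp [hlt, this, hφφ, hne]
      · have : ¬ ((i : ℕ) < k) := by omega
        simp [hlt, this, hψψ, hne]
  have hsum : (∑ τ : Perm (Fin (n' + 1)), ∑ τ' : Perm (Fin (n' + 1)),
      (Perm.sign τ : ℂ) * (Perm.sign τ' : ℂ) *
        ∏ i : Fin (n' + 1),
          ⟪(if (i : ℕ) < k then φ else ψ) (τ i),
           (if (i : ℕ) < k - 1 then φ else ψ) (τ' i)⟫_ℂ)
      = ∑ τ : Perm (Fin (n' + 1)), ⟪φ (τ m), ψ (τ m)⟫_ℂ := by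
    refine Finset.sum_congr rfl fun τ _ => ?_
    rw [Finset.sum_eq_single τ]
    · rw [key τ τ, if_pos rfl]
      rcases Int.units_eq_one_or (Perm.sign τ) with hs | hs <;> simp [hs]
    · intro τ' _ hτ'
      rw [key τ τ', if_neg hτ', mul_zero]
    · simp
  have hfiber : (∑ τ : Perm (Fin (n' + 1)), ⟪φ (τ m), ψ (τ m)⟫_ℂ)
      = (n'.factorial : ℂ) * ∑ j : Fin (n' + 1), ⟪φ j, ψ j⟫_ℂ := by
    have h1 : (∑ τ : Perm (Fin (n' + 1)), ⟪φ (τ m), ψ (τ m)⟫_ℂ)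
        = ∑ τ : Perm (Fin (n' + 1)), ⟪φ (τ 0), ψ (τ 0)⟫_ℂ := by
      refine (Fintype.sum_bijective (fun σ => σ * Equiv.swap 0 m)
        (Group.mulRight_bijective _) _ _ fun σ => ?_)
      simp [Perm.mul_apply]
    rw [h1]
    rw [← Fintype.sum_equiv Perm.decomposeFin.symm
      (fun x : Fin (n' + 1) × Perm (Fin n') => ⟪φ x.1, ψ x.1⟫_ℂ)
      (fun σ => ⟪φ (σ 0), ψ (σ 0)⟫_ℂ)
      (fun x => by obtain ⟨p, σ⟩ := x; simp)]
    rw [Fintype.sum_prod_type]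
    simp only [Fintype.sum_prod_type, Finset.sum_const, nsmul_eq_mul,
      Finset.card_univ, Fintype.card_perm, Fintype.card_fin, ← Finset.mul_sum]
  rw [hsum, hfiber]
  rw [show (1 / (((n' + 1).factorial : ℕ) : ℂ)) *
      ((n'.factorial : ℂ) * ∑ j : Fin (n' + 1), ⟪φ j, ψ j⟫_ℂ)
      = (1 / (((n' + 1 : ℕ) : ℂ))) * ∑ j : Fin (n' + 1), ⟪φ j, ψ j⟫_ℂ from ?_]
  rw [Nat.factorial_succ]
  have h1 : ((n' + 1 : ℕ) : ℂ) ≠ 0 := Nat.cast_ne_zero.mpr (Nat.succ_ne_zero n')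
  have h2 : ((n'.factorial : ℕ) : ℂ) ≠ 0 := Nat.cast_ne_zero.mpr (Nat.factorial_ne_zero n')
  push_cast
  rw [one_div, one_div, mul_inv, mul_assoc, inv_mul_cancel_left₀ h2]
end

section
/- Total variation is the Wasserstein distance for the trivial cost: for probability measures μ, ν on a finite set E, the optimal transport cost with cost c(x,y) = 1_{x≠y} equals the total variation distance sup over f : E → [0,1] of ∫f dμ − ∫f dν. -/
open Finset

/-- For probability measures `μ, ν` on a finite set `E` (given by their mass
functions), the optimal transport cost for the trivial cost `c(x,y) = 1_{x≠y}`
equals the total variation distance `sup_{f : E → [0,1]} Σ f(μ - ν)`. -/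
theorem transport_trivial_cost_eq_tv {E : Type*} [Fintype E] [DecidableEq E]
    [Nonempty E] (μ ν : E → ℝ)
    (hμ0 : ∀ x, 0 ≤ μ x) (hν0 : ∀ x, 0 ≤ ν x)
    (hμ1 : ∑ x, μ x = 1) (hν1 : ∑ x, ν x = 1) :
    sInf { c : ℝ | ∃ π : E × E → ℝ, (∀ p, 0 ≤ π p) ∧
        (∀ x, ∑ y, π (x, y) = μ x) ∧ (∀ y, ∑ x, π (x, y) = ν y) ∧
        c = ∑ p : E × E, if p.1 ≠ p.2 then π p else 0 } =
      sSup { t : ℝ | ∃ f : E → ℝ, (∀ x, 0 ≤ f x ∧ f x ≤ 1) ∧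
        t = ∑ x, f x * (μ x - ν x) } := by
  classical
  set m : E → ℝ := fun x => min (μ x) (ν x) with hm
  set a : E → ℝ := fun x => max (μ x - ν x) 0 with haa
  set b : E → ℝ := fun x => max (ν x - μ x) 0 with hbb
  set T : ℝ := ∑ x, a x with hTdef
  have ha0 : ∀ x, 0 ≤ a x := fun x => le_max_right _ _
  have hb0 : ∀ x, 0 ≤ b x := fun x => le_max_right _ _
  have hm0 : ∀ x, 0 ≤ m x := fun x => le_min (hμ0 x) (hν0 x)
  have hma : ∀ x, m x + a x = μ x := by
    intro x; simp only [hm, haa]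
    rcases le_total (μ x) (ν x) with h | h
    · rw [min_eq_left h, max_eq_right (by linarith)]; ring
    · rw [min_eq_right h, max_eq_left (by linarith)]; ring
  have hmb : ∀ x, m x + b x = ν x := by
    intro x; simp only [hm, hbb]
    rcases le_total (μ x) (ν x) with h | h
    · rw [min_eq_left h, max_eq_left (by linarith)]; ring
    · rw [min_eq_right h, max_eq_right (by linarith)]; ring
  have hsum_m : ∑ x, m x = 1 - T := by
    have : ∑ x, (m x + a x) = 1 := by
      rw [Finset.sum_congr rfl fun x _ => hma x, hμ1]
    rw [Finset.sum_add_distrib] at this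
    linarith [this]
  have hsum_b : ∑ x, b x = T := by
    have : ∑ x, (m x + b x) = 1 := by
      rw [Finset.sum_congr rfl fun x _ => hmb x, hν1]
    rw [Finset.sum_add_distrib, hsum_m] at this
    linarith [this]
  have hT0 : 0 ≤ T := Finset.sum_nonneg fun x _ => ha0 x
  have haT : ∀ x, a x ≤ T := fun x =>
    Finset.single_le_sum (fun y _ => ha0 y) (Finset.mem_univ x)
  have hab : ∀ x, a x * b x = 0 := by
    intro x; simp only [haa, hbb]
    rcases le_total (μ x) (ν x) with h | h
    · rw [max_eq_right (by linarith : μ x - ν x ≤ 0)]; ring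
    · rw [max_eq_right (by linarith : ν x - μ x ≤ 0)]; ring
  have haTT : ∀ x, a x * T / T = a x := by
    intro x
    by_cases hT : T = 0
    · have : a x = 0 := le_antisymm (hT ▸ haT x) (ha0 x)
      simp [this]
    · field_simp
  -- the optimal coupling
  set π₀ : E × E → ℝ := fun p =>
    (if p.1 = p.2 then m p.1 else 0) + a p.1 * b p.2 / T with hπ₀
  have hπ₀0 : ∀ p, 0 ≤ π₀ p := by
    intro p
    apply add_nonneg
    · split <;> simp [hm0]
    · exact div_nonneg (mul_nonneg (ha0 _) (hb0 _)) hT0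
  have hπ₀1 : ∀ x, ∑ y, π₀ (x, y) = μ x := by
    intro x
    simp only [hπ₀]
    rw [Finset.sum_add_distrib]
    have h1 : ∑ y, (if x = y then m x else 0) = m x := by
      simp
    have h2 : ∑ y, a x * b y / T = a x := by
      rw [← Finset.sum_div, ← Finset.mul_sum, hsum_b, haTT]
    rw [h1, h2, hma]
  have hπ₀2 : ∀ y, ∑ x, π₀ (x, y) = ν y := by
    intro y
    simp only [hπ₀]
    rw [Finset.sum_add_distrib]
    have h1 : ∑ x, (if x = y then m x else 0) = m y := by
      simp
    have hbT : b y * T / T = b y := by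
      by_cases hT : T = 0
      · have hbyT : b y ≤ T := hsum_b ▸
          Finset.single_le_sum (fun z _ => hb0 z) (Finset.mem_univ y)
        have : b y = 0 := le_antisymm (hT ▸ hbyT) (hb0 y)
        simp [this]
      · field_simp
    have h2 : ∑ x, a x * b y / T = b y := by
      rw [← Finset.sum_div, ← Finset.sum_mul, ← hTdef, mul_comm, hbT]
    rw [h1, h2, hmb]
  have hcost₀ : ∑ p : E × E, (if p.1 ≠ p.2 then π₀ p else 0) = T := by
    have hpoint : ∀ p : E × E, (if p.1 ≠ p.2 then π₀ p else 0)
        = a p.1 * b p.2 / T := by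
      rintro ⟨x, y⟩
      by_cases h : x = y
      · subst h; simp [hπ₀, hab x]
      · simp [hπ₀, h]
    rw [Finset.sum_congr rfl fun p _ => hpoint p]
    rw [Fintype.sum_prod_type]
    have : ∀ x : E, ∑ y, a x * b y / T = a x := by
      intro x
      rw [← Finset.sum_div, ← Finset.mul_sum, hsum_b, haTT]
    rw [Finset.sum_congr rfl fun x _ => this x]
  -- LHS is least element T
  have hInf : IsLeast { c : ℝ | ∃ π : E × E → ℝ, (∀ p, 0 ≤ π p) ∧
      (∀ x, ∑ y, π (x, y) = μ x) ∧ (∀ y, ∑ x, π (x, y) = ν y) ∧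
      c = ∑ p : E × E, if p.1 ≠ p.2 then π p else 0 } T := by
    constructor
    · exact ⟨π₀, hπ₀0, hπ₀1, hπ₀2, hcost₀.symm⟩
    · rintro c ⟨π, hπ0, hπ1, hπ2, rfl⟩
      have hdiag_le : ∀ x, π (x, x) ≤ m x := by
        intro x
        refine le_min ?_ ?_
        · rw [← hπ1 x]
          exact Finset.single_le_sum (fun y _ => hπ0 (x, y)) (Finset.mem_univ x)
        · rw [← hπ2 x]
          exact Finset.single_le_sum (fun y _ => hπ0 (y, x)) (Finset.mem_univ x)
      have htot : ∑ p : E × E, π p = 1 := by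
        rw [Fintype.sum_prod_type, Finset.sum_congr rfl fun x _ => hπ1 x, hμ1]
      have hsplit : ∑ p : E × E, (if p.1 ≠ p.2 then π p else 0)
          = 1 - ∑ x, π (x, x) := by
        have : ∀ p : E × E, (if p.1 ≠ p.2 then π p else 0)
            = π p - (if p.1 = p.2 then π p else 0) := by
          rintro ⟨x, y⟩; by_cases h : x = y <;> simp [h]
        rw [Finset.sum_congr rfl fun p _ => this p, Finset.sum_sub_distrib, htot]
        congr 1
        rw [Fintype.sum_prod_type]
        have : ∀ x : E, ∑ y, (if x = y then π (x, y) else 0) = π (x, x) := by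
          intro x; simp
        rw [Finset.sum_congr rfl fun x _ => this x]
      rw [hsplit]
      have : ∑ x, π (x, x) ≤ 1 - T := by
        rw [← hsum_m]
        exact Finset.sum_le_sum fun x _ => hdiag_le x
      linarith
  -- RHS is greatest element T
  have hSup : IsGreatest { t : ℝ | ∃ f : E → ℝ, (∀ x, 0 ≤ f x ∧ f x ≤ 1) ∧
      t = ∑ x, f x * (μ x - ν x) } T := by
    constructor
    · refine ⟨fun x => if ν x < μ x then 1 else 0, ?_, ?_⟩
      · intro x; simp only; split <;> norm_num
      · rw [hTdef]
        refine Finset.sum_congr rfl fun x _ => ?_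
        simp only [haa]
        by_cases h : ν x < μ x
        · rw [if_pos h, max_eq_left (by linarith)]; ring
        · rw [if_neg h, max_eq_right (by push_neg at h; linarith)]; ring
    · rintro t ⟨f, hf, rfl⟩
      refine Finset.sum_le_sum fun x _ => ?_
      rcases le_total 0 (μ x - ν x) with h | h
      · calc f x * (μ x - ν x) ≤ 1 * (μ x - ν x) :=
              mul_le_mul_of_nonneg_right (hf x).2 h
          _ = μ x - ν x := one_mul _
          _ ≤ a x := le_max_left _ _
      · exact le_trans (mul_nonpos_of_nonneg_of_nonpos (hf x).1 h) (ha0 x)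
  rw [hInf.csInf_eq, hSup.csSup_eq]
end

section
/- The quantum Wasserstein distance of order 1 dominates the trace distance: for any two density operators ρ, σ on H^{⊗n}, ‖ρ−σ‖₁ ≤ ‖ρ−σ‖_{W1}. -/
open scoped ComplexOrder
open Finset

/-- Half the trace norm `(1/2) tr|X|` of a Hermitian matrix, via eigenvalues. -/
noncomputable def halfTraceNorm {m : Type*} [Fintype m] [DecidableEq m]
    (X : Matrix m m ℂ) : ℝ :=
  if h : X.IsHermitian then (1 / 2) * ∑ i, |h.eigenvalues i| else 0

/-- The quantum Wasserstein distance of order 1 on `(ℂ^d)^{⊗n}`, operators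
modelled as matrices indexed by `Fin n → Fin d`: the infimum of
`Σ_i ‖X^{(i)}‖₁` over decompositions `ρ - σ = Σ_i X^{(i)}` with `X^{(i)}`
self-adjoint and with vanishing partial trace over the `i`-th factor. -/
noncomputable def qW1 {d n : ℕ}
    (ρ σ : Matrix (Fin n → Fin d) (Fin n → Fin d) ℂ) : ℝ :=
  sInf { c : ℝ | ∃ X : Fin n → Matrix (Fin n → Fin d) (Fin n → Fin d) ℂ,
    ρ - σ = ∑ i, X i ∧ (∀ i, (X i).IsHermitian) ∧
    (∀ i, ∀ a b : Fin n → Fin d,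
      ∑ s : Fin d, X i (Function.update a i s) (Function.update b i s) = 0) ∧
    c = ∑ i, halfTraceNorm (X i) }

section Aux

open Matrix

variable {m : Type*} [Fintype m] [DecidableEq m]

lemma key (W : Matrix m m ℂ) (hW : star W * W = 1) (s lam : m → ℝ)
    (hs : ∀ i, |s i| ≤ 1) :
    (Matrix.trace (Matrix.diagonal (fun i => (s i : ℂ)) * W *
      Matrix.diagonal (fun j => (lam j : ℂ)) * star W)).re ≤ ∑ j, |lam j| := by
  have hcol : ∀ j, ∑ i, Complex.normSq (W i j) = 1 := by
    intro j
    have h1 : (star W * W) j j = (1 : Matrix m m ℂ) j j := by rw [hW]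
    rw [Matrix.mul_apply, Matrix.one_apply_eq] at h1
    have h2 : ∑ i, (star W) j i * W i j = ∑ i, (Complex.normSq (W i j) : ℂ) := by
      apply Finset.sum_congr rfl
      intro i _
      simp [Matrix.star_apply, mul_comm, Complex.mul_conj]
    rw [h2] at h1
    have := congrArg Complex.re h1
    simpa [Complex.re_sum] using this
  have htr : (Matrix.trace (Matrix.diagonal (fun i => (s i : ℂ)) * W *
      Matrix.diagonal (fun j => (lam j : ℂ)) * star W)).re
      = ∑ i, ∑ j, s i * lam j * Complex.normSq (W i j) := by
    have expand : ∀ i, (Matrix.diagonal (fun i => (s i : ℂ)) * W *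
        Matrix.diagonal (fun j => (lam j : ℂ)) * star W) i i
        = ∑ j, (s i : ℂ) * W i j * (lam j : ℂ) * star (W i j) := by
      intro i
      rw [Matrix.mul_apply]
      apply Finset.sum_congr rfl
      intro j _
      rw [Matrix.mul_diagonal, Matrix.diagonal_mul, Matrix.star_apply]
    rw [Matrix.trace]
    simp only [Matrix.diag_apply]
    rw [Finset.sum_congr rfl (fun i _ => expand i), Complex.re_sum]
    apply Finset.sum_congr rfl
    intro i _
    rw [Complex.re_sum]
    apply Finset.sum_congr rfl
    intro j _
    have : ((s i : ℂ) * W i j * (lam j : ℂ) * star (W i j))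
        = ((s i * lam j * Complex.normSq (W i j) : ℝ) : ℂ) := by
      rw [show ((s i : ℂ) * W i j * (lam j : ℂ) * star (W i j))
          = ((s i : ℂ) * (lam j : ℂ)) * (W i j * star (W i j)) from by ring,
        Complex.star_def, Complex.mul_conj]
      push_cast
      ring
    rw [this, Complex.ofReal_re]
  rw [htr, Finset.sum_comm]
  apply Finset.sum_le_sum
  intro j _
  calc ∑ i, s i * lam j * Complex.normSq (W i j)
      ≤ ∑ i, |lam j| * Complex.normSq (W i j) := by
        apply Finset.sum_le_sum
        intro i _
        apply mul_le_mul_of_nonneg_right _ (Complex.normSq_nonneg _)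
        calc s i * lam j ≤ |s i * lam j| := le_abs_self _
          _ = |s i| * |lam j| := abs_mul _ _
          _ ≤ 1 * |lam j| := mul_le_mul_of_nonneg_right (hs i) (abs_nonneg _)
          _ = |lam j| := one_mul _
    _ = |lam j| := by rw [← Finset.mul_sum, hcol, mul_one]

lemma key2 (V U : Matrix m m ℂ) (hV : V ∈ Matrix.unitaryGroup m ℂ)
    (hU : U ∈ Matrix.unitaryGroup m ℂ) (s lam : m → ℝ) (hs : ∀ i, |s i| ≤ 1) :
    (Matrix.trace (V * Matrix.diagonal (fun i => (s i : ℂ)) * star V *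
      (U * Matrix.diagonal (fun j => (lam j : ℂ)) * star U))).re ≤ ∑ j, |lam j| := by
  set W : Matrix m m ℂ := star V * U with hWdef
  have hsW : star W = star U * V := by
    rw [hWdef, Matrix.star_mul, star_star]
  have hW : star W * W = 1 := by
    rw [hsW, hWdef, Matrix.mul_assoc, ← Matrix.mul_assoc V (star V) U,
      (Matrix.mem_unitaryGroup_iff).mp hV, Matrix.one_mul,
      (Matrix.mem_unitaryGroup_iff').mp hU]
  have htr : Matrix.trace (V * Matrix.diagonal (fun i => (s i : ℂ)) * star V *
      (U * Matrix.diagonal (fun j => (lam j : ℂ)) * star U))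
      = Matrix.trace (Matrix.diagonal (fun i => (s i : ℂ)) * W *
        Matrix.diagonal (fun j => (lam j : ℂ)) * star W) := by
    rw [hsW, hWdef]
    rw [show V * Matrix.diagonal (fun i => (s i : ℂ)) * star V *
        (U * Matrix.diagonal (fun j => (lam j : ℂ)) * star U)
        = V * (Matrix.diagonal (fun i => (s i : ℂ)) * (star V * U) *
          Matrix.diagonal (fun j => (lam j : ℂ)) * star U) from by
      simp only [Matrix.mul_assoc]]
    rw [Matrix.trace_mul_comm]
    simp only [Matrix.mul_assoc]
  rw [htr]
  exact key W hW s lam hs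

lemma attain {A : Matrix m m ℂ} (hA : A.IsHermitian) :
    (Matrix.trace ((hA.eigenvectorUnitary : Matrix m m ℂ) *
      Matrix.diagonal (fun i => Complex.ofReal (if 0 ≤ hA.eigenvalues i then (1:ℝ) else -1)) *
      star (hA.eigenvectorUnitary : Matrix m m ℂ) * A)).re
      = ∑ i, |hA.eigenvalues i| := by
  set U : Matrix m m ℂ := (hA.eigenvectorUnitary : Matrix m m ℂ) with hUdef
  have hU : U ∈ Matrix.unitaryGroup m ℂ := (hA.eigenvectorUnitary).2
  set S : Matrix m m ℂ :=
    Matrix.diagonal (fun i => Complex.ofReal (if 0 ≤ hA.eigenvalues i then (1:ℝ) else -1)) with hSdef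
  have h1 : Matrix.trace (U * S * star U * A) = Matrix.trace
      (S * Matrix.diagonal (RCLike.ofReal ∘ hA.eigenvalues)) := by
    conv_lhs => rw [show A = U * Matrix.diagonal (RCLike.ofReal ∘ hA.eigenvalues) * star U
      from hA.spectral_theorem]
    rw [show U * S * star U * (U * Matrix.diagonal (RCLike.ofReal ∘ hA.eigenvalues) * star U)
        = U * (S * (star U * U) * Matrix.diagonal (RCLike.ofReal ∘ hA.eigenvalues) * star U)
      from by simp only [Matrix.mul_assoc]]
    rw [(Matrix.mem_unitaryGroup_iff').mp hU, Matrix.mul_one, Matrix.trace_mul_comm]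
    rw [show S * Matrix.diagonal (RCLike.ofReal ∘ hA.eigenvalues) * star U * U
        = S * Matrix.diagonal (RCLike.ofReal ∘ hA.eigenvalues) * (star U * U)
      from by simp only [Matrix.mul_assoc]]
    rw [(Matrix.mem_unitaryGroup_iff').mp hU, Matrix.mul_one]
  rw [h1, hSdef, Matrix.diagonal_mul_diagonal, Matrix.trace_diagonal, Complex.re_sum]
  apply Finset.sum_congr rfl
  intro i _
  by_cases h : 0 ≤ hA.eigenvalues i
  · simp [h, abs_of_nonneg h, RCLike.ofReal]
  · simp [h, abs_of_neg (lt_of_not_ge h), RCLike.ofReal]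

lemma bound_trace {A : Matrix m m ℂ} (hA : A.IsHermitian) (V : Matrix m m ℂ)
    (hV : V ∈ Matrix.unitaryGroup m ℂ) (s : m → ℝ) (hs : ∀ i, |s i| ≤ 1) :
    (Matrix.trace (V * Matrix.diagonal (fun i => (s i : ℂ)) * star V * A)).re
      ≤ ∑ i, |hA.eigenvalues i| := by
  have h1 : Matrix.trace (V * Matrix.diagonal (fun i => (s i : ℂ)) * star V * A)
      = Matrix.trace (V * Matrix.diagonal (fun i => (s i : ℂ)) * star V *
        ((hA.eigenvectorUnitary : Matrix m m ℂ) *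
          Matrix.diagonal (RCLike.ofReal ∘ hA.eigenvalues) *
          star (hA.eigenvectorUnitary : Matrix m m ℂ))) := by
    nth_rewrite 1 [show A = (hA.eigenvectorUnitary : Matrix m m ℂ) *
          Matrix.diagonal (RCLike.ofReal ∘ hA.eigenvalues) *
          star (hA.eigenvectorUnitary : Matrix m m ℂ) from hA.spectral_theorem]
    rfl
  rw [h1]
  have h2 : (RCLike.ofReal ∘ hA.eigenvalues : m → ℂ)
      = fun j => ((hA.eigenvalues j : ℝ) : ℂ) := rfl
  rw [h2]
  exact key2 V (hA.eigenvectorUnitary : Matrix m m ℂ) hV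
    (hA.eigenvectorUnitary).2 s hA.eigenvalues hs

lemma sum_abs_eig_add_le {A B : Matrix m m ℂ} (hA : A.IsHermitian) (hB : B.IsHermitian)
    (hAB : (A + B).IsHermitian) :
    ∑ i, |hAB.eigenvalues i| ≤ ∑ i, |hA.eigenvalues i| + ∑ i, |hB.eigenvalues i| := by
  set V : Matrix m m ℂ := (hAB.eigenvectorUnitary : Matrix m m ℂ) with hVdef
  set s : m → ℝ := fun i => if 0 ≤ hAB.eigenvalues i then 1 else -1 with hsdef
  have hs : ∀ i, |s i| ≤ 1 := by
    intro i
    by_cases h : 0 ≤ hAB.eigenvalues i <;> simp [hsdef, h]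
  have hattain : (Matrix.trace (V * Matrix.diagonal (fun i => (s i : ℂ)) * star V *
      (A + B))).re = ∑ i, |hAB.eigenvalues i| := attain hAB
  have hsplit : V * Matrix.diagonal (fun i => (s i : ℂ)) * star V * (A + B)
      = V * Matrix.diagonal (fun i => (s i : ℂ)) * star V * A
        + V * Matrix.diagonal (fun i => (s i : ℂ)) * star V * B := Matrix.mul_add _ _ _
  rw [hsplit, Matrix.trace_add, Complex.add_re] at hattain
  rw [← hattain]
  have hVu : V ∈ Matrix.unitaryGroup m ℂ := (hAB.eigenvectorUnitary).2
  exact add_le_add (bound_trace hA V hVu s hs) (bound_trace hB V hVu s hs)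

lemma halfTraceNorm_nonneg (X : Matrix m m ℂ) : 0 ≤ halfTraceNorm X := by
  rw [halfTraceNorm]
  split
  · positivity
  · exact le_refl 0

lemma halfTraceNorm_zero : halfTraceNorm (0 : Matrix m m ℂ) = 0 := by
  have h0 : (0 : Matrix m m ℂ).IsHermitian := Matrix.isHermitian_zero
  rw [halfTraceNorm, dif_pos h0]
  have := attain h0
  rw [Matrix.mul_zero, Matrix.trace_zero] at this
  rw [← this]
  simp

lemma halfTraceNorm_add_le {A B : Matrix m m ℂ} (hA : A.IsHermitian)
    (hB : B.IsHermitian) :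
    halfTraceNorm (A + B) ≤ halfTraceNorm A + halfTraceNorm B := by
  have hAB : (A + B).IsHermitian := hA.add hB
  rw [halfTraceNorm, halfTraceNorm, halfTraceNorm, dif_pos hAB, dif_pos hA, dif_pos hB]
  have := sum_abs_eig_add_le hA hB hAB
  linarith

lemma halfTraceNorm_sum_le {ι : Type*} [DecidableEq ι] (t : Finset ι) (X : ι → Matrix m m ℂ)
    (h : ∀ i ∈ t, (X i).IsHermitian) :
    halfTraceNorm (∑ i ∈ t, X i) ≤ ∑ i ∈ t, halfTraceNorm (X i) := by
  induction t using Finset.induction_on with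
  | empty => simp [halfTraceNorm_zero]
  | insert _ _ hnotmem ih =>
    rename_i a t'
    rw [Finset.sum_insert hnotmem, Finset.sum_insert hnotmem]
    have hsum : (∑ i ∈ t', X i).IsHermitian := by
      have : (∑ i ∈ t', X i)ᴴ = ∑ i ∈ t', (X i)ᴴ := Matrix.conjTranspose_sum _ _
      rw [Matrix.IsHermitian, this]
      apply Finset.sum_congr rfl
      intro i hi
      exact h i (Finset.mem_insert_of_mem hi)
    calc halfTraceNorm (X a + ∑ i ∈ t', X i)
        ≤ halfTraceNorm (X a) + halfTraceNorm (∑ i ∈ t', X i) :=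
          halfTraceNorm_add_le (h a (Finset.mem_insert_self a t')) hsum
      _ ≤ halfTraceNorm (X a) + ∑ i ∈ t', halfTraceNorm (X i) := by
          have := ih (fun i hi => h i (Finset.mem_insert_of_mem hi))
          linarith

section Construction

variable {d n : ℕ}

/-- Replace the coordinates `< k` of `a` by those of `c`. -/
def mixFn (k : ℕ) (c a : Fin n → Fin d) : Fin n → Fin d :=
  fun j => if (j : ℕ) < k then c j else a j

/-- Interpolating family: `ZM M k` replaces the first `k` sites of `M` by
maximally mixed states tensored with the partial trace over those sites. -/
noncomputable def ZM (M : Matrix (Fin n → Fin d) (Fin n → Fin d) ℂ) (k : ℕ) :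
    Matrix (Fin n → Fin d) (Fin n → Fin d) ℂ :=
  Matrix.of fun a b =>
    if (∀ j : Fin n, (j : ℕ) < k → a j = b j) then
      ((1 : ℂ) / d) ^ n * ∑ c : Fin n → Fin d, M (mixFn k c a) (mixFn k c b)
    else 0

lemma ZM_zero (hd : (d : ℂ) ≠ 0) (M : Matrix (Fin n → Fin d) (Fin n → Fin d) ℂ) :
    ZM M 0 = M := by
  ext a b
  have hcond : ∀ j : Fin n, (j : ℕ) < 0 → a j = b j := by
    intro j hj; exact absurd hj (Nat.not_lt_zero _)
  have hmix : ∀ c x : Fin n → Fin d, mixFn 0 c x = x := by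
    intro c x; funext j; simp [mixFn]
  rw [ZM, Matrix.of_apply, if_pos hcond]
  simp only [hmix]
  rw [Finset.sum_const, Finset.card_univ]
  have hcard : Fintype.card (Fin n → Fin d) = d ^ n := by
    simp [Fintype.card_fun]
  rw [hcard, nsmul_eq_mul]
  push_cast
  rw [one_div, inv_pow, ← mul_assoc, inv_mul_cancel₀ (pow_ne_zero _ hd), one_mul]

lemma ZM_last (M : Matrix (Fin n → Fin d) (Fin n → Fin d) ℂ) (hM : M.trace = 0) :
    ZM M n = 0 := by
  ext a b
  rw [ZM, Matrix.of_apply]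
  split
  · have hmix : ∀ c x : Fin n → Fin d, mixFn n c x = c := by
      intro c x; funext j; simp [mixFn, j.isLt]
    simp only [hmix]
    have : ∑ c : Fin n → Fin d, M c c = M.trace := rfl
    rw [this, hM, mul_zero]
    rfl
  · rfl

lemma ZM_herm {M : Matrix (Fin n → Fin d) (Fin n → Fin d) ℂ} (hM : M.IsHermitian)
    (k : ℕ) : (ZM M k).IsHermitian := by
  rw [Matrix.IsHermitian]
  ext a b
  rw [Matrix.conjTranspose_apply, ZM, Matrix.of_apply, Matrix.of_apply]
  by_cases h : ∀ j : Fin n, (j : ℕ) < k → a j = b j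
  · rw [if_pos (fun j hj => (h j hj).symm), if_pos h]
    rw [star_mul', star_sum]
    congr 1
    · simp
    · apply Finset.sum_congr rfl
      intro c _
      exact hM.apply _ _
  · rw [if_neg (fun hc => h (fun j hj => (hc j hj).symm)), if_neg h, star_zero]

end Construction

section Construction2

variable {d n : ℕ}

lemma reindex {d n : ℕ} (F : (Fin n → Fin d) → ℂ) (i : Fin n) :
    ∑ s : Fin d, ∑ c : Fin n → Fin d, F (Function.update c i s)
      = ∑ s : Fin d, ∑ c : Fin n → Fin d, F c := by
  have hinv : Function.Involutive
      (fun p : (Fin n → Fin d) × Fin d => (Function.update p.1 i p.2, p.1 i)) := by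
    intro p
    simp [Function.update_idem]
  have key := Fintype.sum_bijective _ hinv.bijective
    (fun p : (Fin n → Fin d) × Fin d => F (Function.update p.1 i p.2))
    (fun p : (Fin n → Fin d) × Fin d => F p.1)
    (fun p => rfl)
  rw [Finset.sum_comm]
  rw [← Fintype.sum_prod_type (fun p : (Fin n → Fin d) × Fin d => F (Function.update p.1 i p.2))]
  rw [key]
  rw [Fintype.sum_prod_type (fun p : (Fin n → Fin d) × Fin d => F p.1)]
  exact Finset.sum_comm

lemma telescope (M : Matrix (Fin n → Fin d) (Fin n → Fin d) ℂ)
    (hd : (d : ℂ) ≠ 0) (hM : M.trace = 0) :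
    ∑ i : Fin n, (ZM M (i : ℕ) - ZM M ((i : ℕ) + 1)) = M := by
  rw [Fin.sum_univ_eq_sum_range (fun i => ZM M i - ZM M (i + 1)) n]
  rw [Finset.sum_range_sub' (fun i => ZM M i) n]
  rw [ZM_zero hd M, ZM_last M hM, sub_zero]

lemma ptrace_zero (M : Matrix (Fin n → Fin d) (Fin n → Fin d) ℂ) (i : Fin n)
    (a b : Fin n → Fin d) :
    ∑ s : Fin d, (ZM M (i : ℕ) - ZM M ((i : ℕ) + 1))
      (Function.update a i s) (Function.update b i s) = 0 := by
  have hne : ∀ j : Fin n, (j : ℕ) < (i : ℕ) → j ≠ i := by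
    intro j hj h
    rw [h] at hj
    exact lt_irrefl _ hj
  have hne' : ∀ j : Fin n, ¬ ((j : ℕ) < (i : ℕ) + 1) → j ≠ i := by
    intro j hj h
    rw [h] at hj
    exact hj (Nat.lt_succ_self _)
  set P := ∀ j : Fin n, (j : ℕ) < (i : ℕ) → a j = b j with hP
  have h1 : ∀ s : Fin d, ZM M (i : ℕ) (Function.update a i s) (Function.update b i s)
      = if P then ((1 : ℂ) / d) ^ n *
          ∑ c : Fin n → Fin d, M (mixFn ((i : ℕ) + 1) (Function.update c i s) a)
            (mixFn ((i : ℕ) + 1) (Function.update c i s) b) else 0 := by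
    intro s
    rw [ZM, Matrix.of_apply]
    have hcond : (∀ j : Fin n, (j : ℕ) < (i : ℕ) →
        Function.update a i s j = Function.update b i s j) ↔ P := by
      constructor
      · intro h j hj
        have := h j hj
        rwa [Function.update_of_ne (hne j hj), Function.update_of_ne (hne j hj)] at this
      · intro h j hj
        rw [Function.update_of_ne (hne j hj), Function.update_of_ne (hne j hj)]
        exact h j hj
    have hmix : ∀ (c x : Fin n → Fin d),
        mixFn (i : ℕ) c (Function.update x i s)
          = mixFn ((i : ℕ) + 1) (Function.update c i s) x := by
      intro c x
      funext j
      by_cases hj : (j : ℕ) < (i : ℕ)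
      · rw [mixFn, mixFn]
        simp only [if_pos hj, if_pos (Nat.lt_succ_of_lt hj)]
        rw [Function.update_of_ne (hne j hj)]
      · by_cases hji : j = i
        · subst hji
          simp [mixFn, Function.update_self]
        · have hj2 : ¬ ((j : ℕ) < (i : ℕ) + 1) := by
            intro hcon
            rcases Nat.lt_succ_iff_lt_or_eq.mp hcon with h' | h'
            · exact hj h'
            · exact hji (Fin.ext h')
          rw [mixFn, mixFn]
          simp only [if_neg hj, if_neg hj2]
          rw [Function.update_of_ne hji]
    simp only [hmix]
    by_cases hp : P
    · rw [if_pos (hcond.mpr hp), if_pos hp]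
    · rw [if_neg (fun hc => hp (hcond.mp hc)), if_neg hp]
  have h2 : ∀ s : Fin d, ZM M ((i : ℕ) + 1) (Function.update a i s) (Function.update b i s)
      = if P then ((1 : ℂ) / d) ^ n *
          ∑ c : Fin n → Fin d, M (mixFn ((i : ℕ) + 1) c a)
            (mixFn ((i : ℕ) + 1) c b) else 0 := by
    intro s
    rw [ZM, Matrix.of_apply]
    have hcond : (∀ j : Fin n, (j : ℕ) < (i : ℕ) + 1 →
        Function.update a i s j = Function.update b i s j) ↔ P := by
      constructor
      · intro h j hj
        have := h j (Nat.lt_succ_of_lt hj)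
        rwa [Function.update_of_ne (hne j hj), Function.update_of_ne (hne j hj)] at this
      · intro h j hj
        by_cases hji : j = i
        · subst hji
          rw [Function.update_self, Function.update_self]
        · have hj' : (j : ℕ) < (i : ℕ) := by
            rcases Nat.lt_succ_iff_lt_or_eq.mp hj with h' | h'
            · exact h'
            · exact absurd (Fin.ext h') hji
          rw [Function.update_of_ne hji, Function.update_of_ne hji]
          exact h j hj'
    have hmix : ∀ (c x : Fin n → Fin d),
        mixFn ((i : ℕ) + 1) c (Function.update x i s) = mixFn ((i : ℕ) + 1) c x := by
      intro c x
      funext j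
      by_cases hj : (j : ℕ) < (i : ℕ) + 1
      · rw [mixFn, mixFn]
        simp only [if_pos hj]
      · rw [mixFn, mixFn]
        simp only [if_neg hj]
        rw [Function.update_of_ne (hne' j hj)]
    simp only [hmix]
    by_cases hp : P
    · rw [if_pos (hcond.mpr hp), if_pos hp]
    · rw [if_neg (fun hc => hp (hcond.mp hc)), if_neg hp]
  simp only [Matrix.sub_apply, h1, h2]
  rw [Finset.sum_sub_distrib, sub_eq_zero]
  by_cases hp : P
  · simp only [if_pos hp]
    rw [← Finset.mul_sum, ← Finset.mul_sum]
    congr 1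
    exact reindex (fun c => M (mixFn ((i : ℕ) + 1) c a) (mixFn ((i : ℕ) + 1) c b)) i
  · simp [if_neg hp]

end Construction2

end Aux

/-- The quantum `W₁` distance dominates the trace distance: for density
matrices `ρ, σ` on `(ℂ^d)^{⊗n}`, `‖ρ-σ‖₁ ≤ ‖ρ-σ‖_{W₁}`. -/
theorem traceDist_le_qW1 {d n : ℕ}
    (ρ σ : Matrix (Fin n → Fin d) (Fin n → Fin d) ℂ)
    (hρ : ρ.PosSemidef) (hσ : σ.PosSemidef)
    (hρ1 : ρ.trace = 1) (hσ1 : σ.trace = 1) :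
    halfTraceNorm (ρ - σ) ≤ qW1 ρ σ := by
  have hMtr : (ρ - σ).trace = 0 := by rw [Matrix.trace_sub, hρ1, hσ1, sub_self]
  rw [qW1]
  by_cases hn : n = 0
  · subst hn
    have hM0 : ρ - σ = 0 := by
      ext a b
      rw [show b = a from Subsingleton.elim b a]
      have h1 : (ρ - σ).trace = (ρ - σ) a a := by
        rw [Matrix.trace, show a = default from Subsingleton.elim a default]
        exact Fintype.sum_unique _
      rw [← h1, hMtr, Matrix.zero_apply]
    rw [hM0, halfTraceNorm_zero]
    apply le_csInf
    · refine ⟨0, fun _ => 0, ?_, fun i => Matrix.isHermitian_zero, fun i => i.elim0, ?_⟩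
      · simp
      · simp [halfTraceNorm_zero]
    · rintro c ⟨Y, -, -, -, rfl⟩
      exact Finset.sum_nonneg fun i _ => halfTraceNorm_nonneg _
  · by_cases hd : d = 0
    · exfalso
      subst hd
      have hempty : IsEmpty (Fin n → Fin 0) :=
        ⟨fun f => (f ⟨0, Nat.pos_of_ne_zero hn⟩).elim0⟩
      have h0 : ρ.trace = 0 := by
        rw [Matrix.trace]
        rw [@Finset.univ_eq_empty _ _ hempty]
        simp
      rw [hρ1] at h0
      exact one_ne_zero h0
    · have hdC : (d : ℂ) ≠ 0 := Nat.cast_ne_zero.mpr hd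
      have hMher : (ρ - σ).IsHermitian := hρ.1.sub hσ.1
      set X : Fin n → Matrix (Fin n → Fin d) (Fin n → Fin d) ℂ :=
        fun i => ZM (ρ - σ) (i : ℕ) - ZM (ρ - σ) ((i : ℕ) + 1) with hXdef
      have hherm : ∀ i, (X i).IsHermitian :=
        fun i => (ZM_herm hMher _).sub (ZM_herm hMher _)
      have hsum : ρ - σ = ∑ i, X i := (telescope (ρ - σ) hdC hMtr).symm
      apply le_csInf
      · exact ⟨∑ i, halfTraceNorm (X i), X, hsum, hherm,
          fun i a b => ptrace_zero (ρ - σ) i a b, rfl⟩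
      · rintro c ⟨Y, hYsum, hYherm, -, rfl⟩
        calc halfTraceNorm (ρ - σ) = halfTraceNorm (∑ i, Y i) := by rw [← hYsum]
          _ ≤ ∑ i, halfTraceNorm (Y i) :=
            halfTraceNorm_sum_le _ _ (fun i _ => hYherm i)
end
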